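/- arXiv:1911.08540 — 8 statements merged into one kernel-verified Lean document; each statement's English description precedes it below -/
import Mathlib

section
/- Let A, B, C be finite subsets of ℚ with A ∩ C ⊆ B. Define A ⫫_B C to mean: for all a ∈ A \ B and c ∈ C \ B with a ≤ c, there exists b ∈ B with a ≤ b ≤ c. Then this relation satisfies transitivity on the left: if B ⊆ A, B ⊆ C ⊆ D, A ⫫_B C and A ⫫_C D, then A ⫫_B D. -/
/-- `A ⫫_B C` on finite subsets of ℚ: for every `a ∈ A \ B` and `c ∈ C \ B` with
`a ≤ c` there is `b ∈ B` with `a ≤ b ≤ c`. -/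
def IndepQ (A B C : Finset ℚ) : Prop :=
  ∀ a ∈ A, a ∉ B → ∀ c ∈ C, c ∉ B → a ≤ c → ∃ b ∈ B, a ≤ b ∧ b ≤ c

/-- Transitivity on the left for `⫫` on `(ℚ, ≤)`: if `B ⊆ A`, `B ⊆ C ⊆ D`, `A ⫫_B C` and `A ⫫_C D`, then `A ⫫_B D`. -/
theorem indepQ_trans (A B C D : Finset ℚ)
    (hAC : ∀ x ∈ A, x ∈ C → x ∈ B)
    (hBA : B ⊆ A) (hBC : B ⊆ C) (hCD : C ⊆ D)
    (h1 : IndepQ A B C) (h2 : IndepQ A C D) :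
    IndepQ A B D := by
  intro a ha haB d hd hdB had
  by_cases hdC : d ∈ C
  · exact h1 a ha haB d hdC hdB had
  · have haC : a ∉ C := fun h => haB (hAC a ha h)
    obtain ⟨c, hcC, hac, hcd⟩ := h2 a ha haC d hd hdC had
    by_cases hcB : c ∈ B
    · exact ⟨c, hcB, hac, hcd⟩
    · obtain ⟨b, hbB, hab, hbc⟩ := h1 a ha haB c hcC hcB hac
      exact ⟨b, hbB, hab, hbc.trans hcd⟩
end

section
/- For the relation on finite subsets of ℚ defined by A ⫫_B C iff for all a ∈ A \ B and c ∈ C \ B with a ≤ c there exists b ∈ B with a ≤ b ≤ c, monotonicity holds: if A ⫫_B (C ∪ D) then A ⫫_B C and A ⫫_{B ∪ C} D. -/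
/-- Monotonicity: if `A ⫫_B (C ∪ D)` then `A ⫫_B C` and `A ⫫_{B ∪ C} D`. -/
theorem indepQ_monotone (A B C D : Finset ℚ) (h : IndepQ A B (C ∪ D)) :
    IndepQ A B C ∧ IndepQ A (B ∪ C) D := by
  constructor
  · intro a ha haB c hc hcB hac
    exact h a ha haB c (Finset.mem_union_left D hc) hcB hac
  · intro a ha haBC d hd hdBC had
    have haB : a ∉ B := fun hb => haBC (Finset.mem_union_left C hb)
    have hdB : d ∉ B := fun hb => hdBC (Finset.mem_union_left C hb)
    obtain ⟨b, hbB, hab, hbd⟩ := h a ha haB d (Finset.mem_union_right C hd) hdB had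
    exact ⟨b, Finset.mem_union_left C hbB, hab, hbd⟩
end

section
/- For the relation on finite subsets of ℚ defined by A ⫫_B C iff for all a ∈ A \ B and c ∈ C \ B with a ≤ c there exists b ∈ B with a ≤ b ≤ c, existence holds in the following form: for every finite B ⊆ ℚ, every a ∈ ℚ, and every finite C ⊆ ℚ, there exists a' ∈ ℚ in the same orbit as a under the pointwise stabilizer of B in the group of order automorphisms of ℚ, such that {a'} ⫫_B C. -/
/-- Piecewise linear map: identity outside `(l,u)`, affine on `(l,a]` onto `(l,a']`
and on `(a,u)` onto `(a',u)`. -/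
def pwMap (l a a' u : ℚ) (x : ℚ) : ℚ :=
  if x ≤ l then x
  else if x ≤ a then l + (x - l) * ((a' - l) / (a - l))
  else if x < u then u + (x - u) * ((u - a') / (u - a))
  else x

lemma pwMap_low {l a a' u x : ℚ} (hx : x ≤ l) : pwMap l a a' u x = x := by
  simp [pwMap, hx]

lemma pwMap_high {l a a' u x : ℚ} (hla : l < a) (hau : a < u) (hx : u ≤ x) :
    pwMap l a a' u x = x := by
  have h1 : ¬ x ≤ l := by linarith
  have h2 : ¬ x ≤ a := by linarith
  have h3 : ¬ x < u := by linarith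
  simp [pwMap, h1, h2, h3]

lemma pwMap_mid1 {l a a' u x : ℚ} (h1 : l < x) (h2 : x ≤ a) :
    pwMap l a a' u x = l + (x - l) * ((a' - l) / (a - l)) := by
  simp [pwMap, not_le.mpr h1, h2]

lemma pwMap_mid2 {l a a' u x : ℚ} (hla : l < a) (h1 : a < x) (h2 : x < u) :
    pwMap l a a' u x = u + (x - u) * ((u - a') / (u - a)) := by
  have h3 : ¬ x ≤ l := by linarith
  have h4 : ¬ x ≤ a := by linarith
  simp [pwMap, h3, h4, h2]

lemma pwMap_range1 {l a a' u x : ℚ} (hla : l < a) (hla' : l < a')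
    (h1 : l < x) (h2 : x ≤ a) :
    l < pwMap l a a' u x ∧ pwMap l a a' u x ≤ a' := by
  rw [pwMap_mid1 h1 h2]
  have hk : (0:ℚ) < (a' - l) / (a - l) := div_pos (by linarith) (by linarith)
  have hne : a - l ≠ 0 := sub_ne_zero.mpr hla.ne'
  have hid : (a - l) * ((a' - l) / (a - l)) = a' - l := by
    field_simp
  constructor
  · nlinarith
  · nlinarith [mul_le_mul_of_nonneg_right (by linarith : x - l ≤ a - l) hk.le]

lemma pwMap_range2 {l a a' u x : ℚ} (hla : l < a) (hau : a < u) (ha'u : a' < u)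
    (h1 : a < x) (h2 : x < u) :
    a' < pwMap l a a' u x ∧ pwMap l a a' u x < u := by
  rw [pwMap_mid2 hla h1 h2]
  have hk : (0:ℚ) < (u - a') / (u - a) := div_pos (by linarith) (by linarith)
  have hne : u - a ≠ 0 := sub_ne_zero.mpr hau.ne'
  have hid : (a - u) * ((u - a') / (u - a)) = a' - u := by
    field_simp; ring
  constructor
  · nlinarith [mul_le_mul_of_nonneg_right (by linarith : a - u ≤ x - u) hk.le]
  · nlinarith

lemma pwMap_strictMono {l a a' u : ℚ} (hla : l < a) (hau : a < u)
    (hla' : l < a') (ha'u : a' < u) : StrictMono (pwMap l a a' u) := by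
  have hk1 : (0:ℚ) < (a' - l) / (a - l) := div_pos (by linarith) (by linarith)
  have hk2 : (0:ℚ) < (u - a') / (u - a) := div_pos (by linarith) (by linarith)
  intro x y hxy
  have tri : ∀ z : ℚ, z ≤ l ∨ (l < z ∧ z ≤ a) ∨ (a < z ∧ z < u) ∨ u ≤ z := by
    intro z
    rcases le_or_gt z l with h | h
    · exact Or.inl h
    rcases le_or_gt z a with h2 | h2
    · exact Or.inr (Or.inl ⟨h, h2⟩)
    rcases lt_or_ge z u with h3 | h3
    · exact Or.inr (Or.inr (Or.inl ⟨h2, h3⟩))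
    · exact Or.inr (Or.inr (Or.inr h3))
  rcases tri x with hx | hx | hx | hx <;> rcases tri y with hy | hy | hy | hy
  · rw [pwMap_low hx, pwMap_low hy]; exact hxy
  · rw [pwMap_low hx]
    exact lt_of_le_of_lt hx (pwMap_range1 (u := u) hla hla' hy.1 hy.2).1
  · rw [pwMap_low hx]
    have := (pwMap_range2 hla hau ha'u hy.1 hy.2).1
    linarith
  · rw [pwMap_low hx, pwMap_high hla hau hy]; exact hxy
  · exfalso; linarith [hx.1]
  · rw [pwMap_mid1 hx.1 hx.2, pwMap_mid1 hy.1 hy.2]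
    nlinarith [mul_lt_mul_of_pos_right (by linarith : x - l < y - l) hk1]
  · have h1 := (pwMap_range1 (u := u) hla hla' hx.1 hx.2).2
    have h2 := (pwMap_range2 hla hau ha'u hy.1 hy.2).1
    linarith
  · have h1 := (pwMap_range1 (u := u) hla hla' hx.1 hx.2).2
    rw [pwMap_high hla hau hy]
    linarith
  · exfalso; linarith [hx.1]
  · exfalso; linarith [hx.1, hy.2]
  · rw [pwMap_mid2 hla hx.1 hx.2, pwMap_mid2 hla hy.1 hy.2]
    nlinarith [mul_lt_mul_of_pos_right (by linarith : x - u < y - u) hk2]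
  · have h1 := (pwMap_range2 hla hau ha'u hx.1 hx.2).2
    rw [pwMap_high hla hau hy]
    linarith
  · exfalso; linarith
  · exfalso; linarith [hy.1]
  · exfalso; linarith [hy.2]
  · rw [pwMap_high hla hau hx, pwMap_high hla hau hy]; exact hxy

lemma pwMap_inv {l a a' u : ℚ} (hla : l < a) (hau : a < u)
    (hla' : l < a') (ha'u : a' < u) (y : ℚ) :
    pwMap l a a' u (pwMap l a' a u y) = y := by
  rcases le_or_gt y l with h | h
  · rw [pwMap_low h, pwMap_low h]
  have hne1 : a - l ≠ 0 := sub_ne_zero.mpr hla.ne'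
  have hne2 : a' - l ≠ 0 := sub_ne_zero.mpr hla'.ne'
  have hne3 : u - a ≠ 0 := sub_ne_zero.mpr hau.ne'
  have hne4 : u - a' ≠ 0 := sub_ne_zero.mpr ha'u.ne'
  rcases le_or_gt y a' with h2 | h2
  · have hr := pwMap_range1 (a' := a) (u := u) hla' hla h h2
    rw [pwMap_mid1 h h2] at hr
    rw [pwMap_mid1 h h2, pwMap_mid1 hr.1 hr.2]
    field_simp
    ring
  rcases lt_or_ge y u with h3 | h3
  · have hr := pwMap_range2 (a' := a) hla' ha'u hau h2 h3
    rw [pwMap_mid2 hla' h2 h3] at hr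
    rw [pwMap_mid2 hla' h2 h3, pwMap_mid2 hla hr.1 hr.2]
    field_simp
    ring
  · rw [pwMap_high hla' ha'u h3, pwMap_high hla hau h3]

lemma exists_orderIso_fix {l a a' u : ℚ} (hla : l < a) (hau : a < u)
    (hla' : l < a') (ha'u : a' < u) :
    ∃ g : ℚ ≃o ℚ, (∀ x, x ≤ l → g x = x) ∧ (∀ x, u ≤ x → g x = x) ∧ g a = a' := by
  have hmono := pwMap_strictMono hla hau hla' ha'u
  have hsurj : Function.Surjective (pwMap l a a' u) := fun y =>
    ⟨pwMap l a' a u y, pwMap_inv hla hau hla' ha'u y⟩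
  refine ⟨StrictMono.orderIsoOfSurjective _ hmono hsurj, ?_, ?_, ?_⟩
  · intro x hx
    show pwMap l a a' u x = x
    exact pwMap_low hx
  · intro x hx
    show pwMap l a a' u x = x
    exact pwMap_high hla hau hx
  · show pwMap l a a' u a = a'
    rw [pwMap_mid1 hla le_rfl]
    have hne : a - l ≠ 0 := sub_ne_zero.mpr hla.ne'
    field_simp
    ring

/-- Existence: each `a` has a point `a'` in the same orbit over `B` with `{a'} ⫫_B C`. -/
theorem indepQ_existence (B C : Finset ℚ) (a : ℚ) :
    ∃ a' : ℚ, (∃ g : ℚ ≃o ℚ, (∀ b ∈ B, g b = b) ∧ g a = a') ∧ IndepQ {a'} B C := by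
  by_cases haB : a ∈ B
  · refine ⟨a, ⟨OrderIso.refl ℚ, fun b _ => rfl, rfl⟩, ?_⟩
    intro x hx hxB
    exact absurd (Finset.mem_singleton.mp hx ▸ haB) hxB
  -- a ∉ B
  · set Blo := B.filter (· < a) with hBlo
    set Bhi := B.filter (a < ·) with hBhi
    have hBsplit : ∀ b ∈ B, b < a ∨ a < b := by
      intro b hb
      rcases lt_trichotomy b a with h | h | h
      · exact Or.inl h
      · exact absurd (h ▸ hb) haB
      · exact Or.inr h
    -- the lower bound l
    set l : ℚ := if h : Blo.Nonempty then Blo.max' h else a - 1 with hl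
    have hla : l < a := by
      rw [hl]
      split
      case isTrue h =>
        exact (Finset.mem_filter.mp (Blo.max'_mem h)).2
      case isFalse h => linarith
    have hBlo_le : ∀ b ∈ B, b < a → b ≤ l := by
      intro b hb hba
      have hbBlo : b ∈ Blo := by rw [hBlo, Finset.mem_filter]; exact ⟨hb, hba⟩
      rw [hl]
      split
      case isTrue h => exact Blo.le_max' b hbBlo
      case isFalse h => exact absurd ⟨b, hbBlo⟩ h
    by_cases hBhiNe : Bhi.Nonempty
    · -- there is a B-element above a; u = min of those
      set u : ℚ := Bhi.min' hBhiNe with hu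
      have huB : u ∈ B ∧ a < u := by
        have := Finset.mem_filter.mp (Bhi.min'_mem hBhiNe)
        exact this
      have hBhi_ge : ∀ b ∈ B, a < b → u ≤ b := by
        intro b hb hab
        exact Bhi.min'_le b (by rw [hBhi, Finset.mem_filter]; exact ⟨hb, hab⟩)
      -- choose a' between max(l, C∩(-∞,u)) and u
      set S : Finset ℚ := insert l (C.filter (· < u)) with hS
      have hSne : S.Nonempty := ⟨l, by rw [hS]; exact Finset.mem_insert_self _ _⟩
      set m : ℚ := S.max' hSne with hm
      have hmu : m < u := by
        rcases Finset.mem_insert.mp (S.max'_mem hSne) with h | h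
        · have hml : m = l := h
          linarith [hla, huB.2]
        · exact (Finset.mem_filter.mp h).2
      set a' : ℚ := (m + u) / 2 with ha'
      have hma' : m < a' := by rw [ha']; linarith
      have ha'u : a' < u := by rw [ha']; linarith
      have hlm : l ≤ m := S.le_max' l (by rw [hS]; exact Finset.mem_insert_self _ _)
      have hla' : l < a' := lt_of_le_of_lt hlm hma'
      obtain ⟨g, hg1, hg2, hg3⟩ := exists_orderIso_fix hla huB.2 hla' ha'u
      refine ⟨a', ⟨g, ?_, hg3⟩, ?_⟩
      · intro b hb
        rcases hBsplit b hb with h | h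
        · exact hg1 b (hBlo_le b hb h)
        · exact hg2 b (hBhi_ge b hb h)
      · intro x hx hxB c hc hcB hxc
        rw [Finset.mem_singleton] at hx
        subst hx
        rcases lt_or_ge c u with h | h
        · exfalso
          have hcm : c ≤ m := S.le_max' c (by
            rw [hS]; exact Finset.mem_insert_of_mem (Finset.mem_filter.mpr ⟨hc, h⟩))
          linarith
        · exact ⟨u, huB.1, le_of_lt ha'u, h⟩
    · -- no B-element above a: move a above everything in C
      have hBall : ∀ b ∈ B, b ≤ l := by
        intro b hb
        rcases hBsplit b hb with h | h
        · exact hBlo_le b hb h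
        · exact absurd ⟨b, by rw [hBhi, Finset.mem_filter]; exact ⟨hb, h⟩⟩ hBhiNe
      set M : ℚ := (insert a C).max' ⟨a, Finset.mem_insert_self _ _⟩ with hM
      have haM : a ≤ M := (insert a C).le_max' a (Finset.mem_insert_self _ _)
      set a' : ℚ := M + 1 with ha'
      set u : ℚ := M + 2 with hu
      have hla' : l < a' := by rw [ha']; linarith
      have hau : a < u := by rw [hu]; linarith
      have ha'u : a' < u := by rw [ha', hu]; linarith
      obtain ⟨g, hg1, hg2, hg3⟩ := exists_orderIso_fix hla hau hla' ha'u
      refine ⟨a', ⟨g, fun b hb => hg1 b (hBall b hb), hg3⟩, ?_⟩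
      intro x hx hxB c hc hcB hxc
      rw [Finset.mem_singleton] at hx
      subst hx
      exfalso
      have : c ≤ M := (insert a C).le_max' c (Finset.mem_insert_of_mem hc)
      rw [ha'] at hxc
      linarith
end

section
/- For the relation on finite subsets of ℚ defined by A ⫫_B C iff for all a ∈ A \ B and c ∈ C \ B with a ≤ c there exists b ∈ B with a ≤ b ≤ c, stationarity holds for singletons: if a and a' lie in the same orbit under the pointwise stabilizer of a finite set B in Aut(ℚ, ≤), and {a} ⫫_B C and {a'} ⫫_B C for a finite set C, then a and a' lie in the same orbit under the pointwise stabilizer of B ∪ C. -/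
/-- Piecewise linear map: identity outside `(l, r)`, sends `a` to `a'`. -/
noncomputable def pw (l r a a' p q x : ℚ) : ℚ :=
  if x ≤ l then x
  else if x ≤ a then a' + (x - a) * p
  else if x < r then a' + (x - a) * q
  else x

lemma exists_orderIso_fix_outside (l r a a' : ℚ) (hla : l < a) (hla' : l < a')
    (har : a < r) (ha'r : a' < r) :
    ∃ g : ℚ ≃o ℚ, g a = a' ∧ (∀ x, x ≤ l → g x = x) ∧ (∀ x, r ≤ x → g x = x) := by
  set p : ℚ := (a' - l) / (a - l) with hpdef
  set q : ℚ := (r - a') / (r - a) with hqdef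
  have hal : (0:ℚ) < a - l := by linarith
  have hra : (0:ℚ) < r - a := by linarith
  have hp : 0 < p := div_pos (by linarith) hal
  have hq : 0 < q := div_pos (by linarith) hra
  have hpe : (a - l) * p = a' - l := by
    rw [hpdef, mul_div_cancel₀ _ hal.ne']
  have hqe : (r - a) * q = r - a' := by
    rw [hqdef, mul_div_cancel₀ _ hra.ne']
  have hmono : StrictMono (pw l r a a' p q) := by
    intro x y hxy
    unfold pw
    rcases le_or_gt x l with hx1 | hx1
    · rw [if_pos hx1]
      rcases le_or_gt y l with hy1 | hy1
      · rw [if_pos hy1]; exact hxy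
      · rw [if_neg (not_le.2 hy1)]
        rcases le_or_gt y a with hy2 | hy2
        · rw [if_pos hy2]; nlinarith [mul_pos (sub_pos.2 hy1) hp]
        · rw [if_neg (not_le.2 hy2)]
          rcases lt_or_ge y r with hy3 | hy3
          · rw [if_pos hy3]; nlinarith [mul_pos (sub_pos.2 hy2) hq]
          · rw [if_neg (not_lt.2 hy3)]; linarith
    · rw [if_neg (not_le.2 hx1)]
      rcases le_or_gt x a with hx2 | hx2
      · rw [if_pos hx2, if_neg (not_le.2 (lt_trans hx1 hxy))]
        rcases le_or_gt y a with hy2 | hy2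
        · rw [if_pos hy2]; nlinarith [mul_pos (sub_pos.2 hxy) hp]
        · rw [if_neg (not_le.2 hy2)]
          rcases lt_or_ge y r with hy3 | hy3
          · rw [if_pos hy3]
            nlinarith [mul_pos (sub_pos.2 hy2) hq, mul_nonneg (sub_nonneg.2 hx2) hp.le]
          · rw [if_neg (not_lt.2 hy3)]
            nlinarith [mul_nonneg (sub_nonneg.2 hx2) hp.le]
      · rw [if_neg (not_le.2 hx2)]
        rcases lt_or_ge x r with hx3 | hx3
        · rw [if_pos hx3, if_neg (by linarith : ¬ y ≤ l), if_neg (by linarith : ¬ y ≤ a)]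
          rcases lt_or_ge y r with hy3 | hy3
          · rw [if_pos hy3]; nlinarith [mul_pos (sub_pos.2 hxy) hq]
          · rw [if_neg (not_lt.2 hy3)]
            nlinarith [mul_pos (sub_pos.2 hx3) hq]
        · rw [if_neg (not_lt.2 hx3), if_neg (by linarith : ¬ y ≤ l),
            if_neg (by linarith : ¬ y ≤ a), if_neg (by linarith : ¬ y < r)]
          exact hxy
  have hsurj : Function.Surjective (pw l r a a' p q) := by
    intro y
    rcases le_or_gt y l with hy1 | hy1
    · exact ⟨y, by unfold pw; rw [if_pos hy1]⟩
    rcases le_or_gt y a' with hy2 | hy2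
    · refine ⟨a + (y - a') / p, ?_⟩
      have hd1 : a + (y - a') / p - l = (y - l) / p := by
        field_simp
        nlinarith [hpe]
      have hx1 : ¬ (a + (y - a') / p ≤ l) := by
        rw [not_le, ← sub_pos, hd1]
        exact div_pos (by linarith) hp
      have hx2 : a + (y - a') / p ≤ a := by
        have : (y - a') / p ≤ 0 := by
          rw [div_le_iff₀ hp]; nlinarith
        linarith
      unfold pw
      rw [if_neg hx1, if_pos hx2]
      have : (a + (y - a') / p - a) * p = y - a' := by
        rw [add_sub_cancel_left, div_mul_cancel₀ _ hp.ne']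
      linarith
    rcases lt_or_ge y r with hy3 | hy3
    · refine ⟨a + (y - a') / q, ?_⟩
      have hx2 : ¬ (a + (y - a') / q ≤ a) := by
        rw [not_le]
        have : 0 < (y - a') / q := div_pos (by linarith) hq
        linarith
      have hd1 : a + (y - a') / q - r = (y - r) / q := by
        field_simp
        nlinarith [hqe]
      have hx3 : a + (y - a') / q < r := by
        rw [← sub_neg, hd1]
        exact div_neg_of_neg_of_pos (by linarith) hq
      have hx1 : ¬ (a + (y - a') / q ≤ l) := by
        rw [not_le]
        have : 0 < (y - a') / q := div_pos (by linarith) hq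
        linarith
      unfold pw
      rw [if_neg hx1, if_neg hx2, if_pos hx3]
      have : (a + (y - a') / q - a) * q = y - a' := by
        rw [add_sub_cancel_left, div_mul_cancel₀ _ hq.ne']
      linarith
    · refine ⟨y, ?_⟩
      unfold pw
      rw [if_neg (by linarith : ¬ y ≤ l), if_neg (by linarith : ¬ y ≤ a),
        if_neg (not_lt.2 hy3)]
  refine ⟨StrictMono.orderIsoOfSurjective _ hmono hsurj, ?_, ?_, ?_⟩
  · show pw l r a a' p q a = a'
    unfold pw
    rw [if_neg (not_le.2 hla), if_pos le_rfl]
    ring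
  · intro x hx
    show pw l r a a' p q x = x
    unfold pw
    rw [if_pos hx]
  · intro x hx
    show pw l r a a' p q x = x
    unfold pw
    rw [if_neg (by linarith : ¬ x ≤ l), if_neg (by linarith : ¬ x ≤ a),
      if_neg (not_lt.2 hx)]

/-- Stationarity for singletons over `(ℚ, ≤)`. -/
theorem indepQ_stationarity (B C : Finset ℚ) (a a' : ℚ)
    (horb : ∃ g : ℚ ≃o ℚ, (∀ b ∈ B, g b = b) ∧ g a = a')
    (h1 : IndepQ {a} B C) (h2 : IndepQ {a'} B C) :
    ∃ g : ℚ ≃o ℚ, (∀ b ∈ B ∪ C, g b = b) ∧ g a = a' := by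
  obtain ⟨g, hgB, hga⟩ := horb
  by_cases hab : a = a'
  · exact ⟨OrderIso.refl ℚ, fun b _ => rfl, hab⟩
  have haB : a ∉ B := fun h => hab (by rw [← hga, hgB a h])
  have ha'B : a' ∉ B := fun h => hab (g.injective (by rw [hga, hgB a' h]))
  have haC : a ∉ C := by
    intro h
    obtain ⟨b, hb, hab1, hab2⟩ := h1 a (Finset.mem_singleton_self a) haB a h haB le_rfl
    exact haB (by rwa [← le_antisymm hab2 hab1])
  have ha'C : a' ∉ C := by
    intro h
    obtain ⟨b, hb, hab1, hab2⟩ := h2 a' (Finset.mem_singleton_self a') ha'B a' h ha'B le_rfl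
    exact ha'B (by rwa [← le_antisymm hab2 hab1])
  have hgfix : ∀ b ∈ B, g.symm b = b := by
    intro b hb
    conv_lhs => rw [← hgB b hb]
    exact g.symm_apply_apply b
  have hiff : ∀ d ∈ B ∪ C, (a ≤ d ↔ a' ≤ d) := by
    intro d hd
    by_cases hdB : d ∈ B
    · constructor
      · intro h
        calc a' = g a := hga.symm
        _ ≤ g d := g.le_iff_le.2 h
        _ = d := hgB d hdB
      · intro h
        calc a = g.symm a' := by rw [← hga, g.symm_apply_apply]
        _ ≤ g.symm d := g.symm.le_iff_le.2 h
        _ = d := hgfix d hdB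
    · have hdC : d ∈ C := (Finset.mem_union.1 hd).resolve_left hdB
      constructor
      · intro h
        obtain ⟨b, hb, h3, h4⟩ := h1 a (Finset.mem_singleton_self a) haB d hdC hdB h
        have : a' ≤ b := by
          calc a' = g a := hga.symm
          _ ≤ g b := g.le_iff_le.2 h3
          _ = b := hgB b hb
        linarith
      · intro h
        obtain ⟨b, hb, h3, h4⟩ := h2 a' (Finset.mem_singleton_self a') ha'B d hdC hdB h
        have : a ≤ b := by
          calc a = g.symm a' := by rw [← hga, g.symm_apply_apply]
          _ ≤ g.symm b := g.symm.le_iff_le.2 h3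
          _ = b := hgfix b hb
        linarith
  have hkey : ∀ d ∈ B ∪ C, d < min a a' ∨ max a a' < d := by
    intro d hd
    have hda : d ≠ a := by
      rintro rfl
      rcases Finset.mem_union.1 hd with h | h
      exacts [haB h, haC h]
    have hda' : d ≠ a' := by
      rintro rfl
      rcases Finset.mem_union.1 hd with h | h
      exacts [ha'B h, ha'C h]
    rcases lt_or_gt_of_ne hda with h | h
    · left
      refine lt_min h ?_
      by_contra hc
      push_neg at hc
      exact absurd ((hiff d hd).2 hc) (not_le.2 h)
    · right
      refine max_lt h (lt_of_le_of_ne ((hiff d hd).1 h.le) hda'.symm)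
  obtain ⟨l, hls, hlfix⟩ : ∃ l, l < min a a' ∧ ∀ d ∈ B ∪ C, d < min a a' → d ≤ l := by
    set L := (B ∪ C).filter (· < min a a') with hL
    by_cases h : L.Nonempty
    · exact ⟨L.max' h, (Finset.mem_filter.1 (L.max'_mem h)).2,
        fun d hd hds => Finset.le_max' L d (Finset.mem_filter.2 ⟨hd, hds⟩)⟩
    · exact ⟨min a a' - 1, by linarith,
        fun d hd hds => absurd ⟨d, Finset.mem_filter.2 ⟨hd, hds⟩⟩ h⟩
  obtain ⟨r, hrs, hrfix⟩ : ∃ r, max a a' < r ∧ ∀ d ∈ B ∪ C, max a a' < d → r ≤ d := by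
    set R := (B ∪ C).filter (max a a' < ·) with hR
    by_cases h : R.Nonempty
    · exact ⟨R.min' h, (Finset.mem_filter.1 (R.min'_mem h)).2,
        fun d hd hds => Finset.min'_le R d (Finset.mem_filter.2 ⟨hd, hds⟩)⟩
    · exact ⟨max a a' + 1, by linarith,
        fun d hd hds => absurd ⟨d, Finset.mem_filter.2 ⟨hd, hds⟩⟩ h⟩
  obtain ⟨g', hg'a, hg'l, hg'r⟩ := exists_orderIso_fix_outside l r a a'
    (lt_of_lt_of_le hls (min_le_left _ _)) (lt_of_lt_of_le hls (min_le_right _ _))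
    (lt_of_le_of_lt (le_max_left _ _) hrs) (lt_of_le_of_lt (le_max_right _ _) hrs)
  refine ⟨g', fun d hd => ?_, hg'a⟩
  rcases hkey d hd with h | h
  · exact hg'l d (hlfix d hd h)
  · exact hg'r d (hrfix d hd h)
end

section
/- Suppose ⫫ is a stationary weak independence relation on a countable homogeneous structure M. Let A, B, C be finite substructures with A ⫫_B C and let g₁, ..., gₙ ∈ Aut(M). Then there exists e ∈ Aut(M) fixing B ∪ C pointwise such that A ⫫_B (C ∪ g₁^e(C) ∪ ... ∪ gₙ^e(C)), where g^e denotes e g e⁻¹; and there exists f ∈ Aut(M) fixing A ∪ B pointwise such that (A ∪ g₁^f(A) ∪ ... ∪ gₙ^f(A)) ⫫_B C. -/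
variable {M : Type*} [DecidableEq M]

/-- The finite set of coordinates of a tuple. -/
def tset {n : ℕ} (x : Fin n → M) : Finset M := Finset.univ.image x

/-- Two tuples realise the same type over the finite set `B` (types = orbits of the
pointwise stabiliser of `B` in the automorphism group `G`, by homogeneity). -/
def SameTypeOver (G : Subgroup (Equiv.Perm M)) (B : Finset M) {n : ℕ}
    (x y : Fin n → M) : Prop :=
  ∃ g ∈ G, (∀ b ∈ B, g b = b) ∧ ∀ i, g (x i) = y i

/-- `indep` is a stationary weak independence relation on `M` (with automorphism
group `G`): invariance, monotonicity, transitivity, existence and stationarity,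
each in left and right form; symmetry is NOT assumed. -/
structure IsSWIR (G : Subgroup (Equiv.Perm M))
    (indep : Finset M → Finset M → Finset M → Prop) : Prop where
  invariance : ∀ g ∈ G, ∀ A B C : Finset M,
    indep A B C → indep (A.image g) (B.image g) (C.image g)
  monotone_right : ∀ A B C D : Finset M,
    indep A B (C ∪ D) → indep A B C ∧ indep A (B ∪ C) D
  monotone_left : ∀ A B C D : Finset M,
    indep (A ∪ D) B C → indep A B C ∧ indep D (A ∪ B) C
  trans_right : ∀ A B C D : Finset M, indep A B C → indep A (B ∪ C) D → indep A B D
  trans_left : ∀ A B C D : Finset M, indep A B C → indep D (A ∪ B) C → indep D B C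
  exists_right : ∀ (B C : Finset M) (n : ℕ) (x : Fin n → M),
    ∃ a : Fin n → M, SameTypeOver G B x a ∧ indep (tset a) B C
  exists_left : ∀ (B C : Finset M) (n : ℕ) (x : Fin n → M),
    ∃ a : Fin n → M, SameTypeOver G B x a ∧ indep C B (tset a)
  stationary_right : ∀ (B C : Finset M) (n : ℕ) (x y : Fin n → M),
    SameTypeOver G B x y → indep (tset x) B C → indep (tset y) B C →
    SameTypeOver G (B ∪ C) x y
  stationary_left : ∀ (B C : Finset M) (n : ℕ) (x y : Fin n → M),
    SameTypeOver G B x y → indep C B (tset x) → indep C B (tset y) →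
    SameTypeOver G (B ∪ C) x y

/-- `g` moves almost R-maximally: every type over a finite `X` has a realisation `a`
with `a ⫫_X g(a)`. -/
def MovesAlmostRMax (G : Subgroup (Equiv.Perm M))
    (indep : Finset M → Finset M → Finset M → Prop) (g : Equiv.Perm M) : Prop :=
  ∀ (X : Finset M) (n : ℕ) (x : Fin n → M),
    ∃ a : Fin n → M, SameTypeOver G X x a ∧
      indep (tset a) X (tset (fun i => g (a i)))

/-- `g` moves almost L-maximally: every type over a finite `X` has a realisation `a`
with `g(a) ⫫_X a`. -/
def MovesAlmostLMax (G : Subgroup (Equiv.Perm M))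
    (indep : Finset M → Finset M → Finset M → Prop) (g : Equiv.Perm M) : Prop :=
  ∀ (X : Finset M) (n : ℕ) (x : Fin n → M),
    ∃ a : Fin n → M, SameTypeOver G X x a ∧
      indep (tset (fun i => g (a i))) X (tset a)


lemma tset_mem' {M : Type*} [DecidableEq M] {n : ℕ} {x : Fin n → M} {m : M} :
    m ∈ tset x ↔ ∃ i, x i = m := by simp [tset]

lemma image_fix' {M : Type*} [DecidableEq M] (π : Equiv.Perm M) (S : Finset M)
    (h : ∀ m ∈ S, π m = m) : S.image ⇑π = S := by
  ext m
  simp only [Finset.mem_image]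
  constructor
  · rintro ⟨x, hx, rfl⟩; rw [h x hx]; exact hx
  · intro hm; exact ⟨m, hm, h m hm⟩

lemma fix_inv' {M : Type*} (π : Equiv.Perm M) {m : M} (h : π m = m) : π⁻¹ m = m := by
  conv_lhs => rw [← h]
  simp

lemma exists_enum' {M : Type*} [DecidableEq M] (C : Finset M) :
    ∃ c : Fin C.card → M, tset c = C := by
  refine ⟨fun i => ((C.equivFin.symm i : C) : M), ?_⟩
  ext m
  simp only [tset_mem']
  constructor
  · rintro ⟨i, rfl⟩; exact (C.equivFin.symm i).2
  · intro hm; exact ⟨C.equivFin ⟨m, hm⟩, by simp⟩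

/-- Lemma 2.5: given `A ⫫_B C` and `g₁, …, gₙ ∈ Aut(M)`, there is `e ∈ Aut(M)`
fixing `B ∪ C` pointwise with `A ⫫_B C g₁ᵉ(C) ⋯ gₙᵉ(C)`, and `f ∈ Aut(M)` fixing
`A ∪ B` pointwise with `A g₁ᶠ(A) ⋯ gₙᶠ(A) ⫫_B C` (where `gᵉ = e g e⁻¹`). -/
theorem swir_add_conjugates {M : Type*} [DecidableEq M] [Countable M]
    (G : Subgroup (Equiv.Perm M)) (indep : Finset M → Finset M → Finset M → Prop)
    (hswir : IsSWIR G indep) (A B C : Finset M) (h : indep A B C)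
    (k : ℕ) (gs : Fin k → Equiv.Perm M) (hgs : ∀ i, gs i ∈ G) :
    (∃ e ∈ G, (∀ m ∈ B ∪ C, e m = m) ∧
      indep A B (C ∪ Finset.univ.biUnion fun i => C.image ⇑(e * gs i * e⁻¹))) ∧
    (∃ f ∈ G, (∀ m ∈ A ∪ B, f m = m) ∧
      indep (A ∪ Finset.univ.biUnion fun i => A.image ⇑(f * gs i * f⁻¹)) B C) := by
  constructor
  · -- the `e` part
    obtain ⟨c, hc⟩ := exists_enum' C
    have hcC : ∀ j, c j ∈ C := fun j => by rw [← hc]; exact tset_mem'.2 ⟨j, rfl⟩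
    -- the extended tuple (c, g₁ c, …, g_k c)
    set blk : Fin (k+1) × Fin _ → M :=
      fun p => Fin.cases (c p.2) (fun i => gs i (c p.2)) p.1 with hblk
    set X : Fin ((k+1) * _) → M := blk ∘ ⇑finProdFinEquiv.symm with hX
    obtain ⟨a, ⟨σ, hσG, hσB, hσX⟩, hind⟩ := hswir.exists_left B A _ X
    have hσX' : ∀ p : Fin (k+1) × Fin _, σ (blk p) = a (finProdFinEquiv p) := by
      intro p
      have := hσX (finProdFinEquiv p)
      simpa [hX] using this
    set c' : Fin _ → M := fun j => a (finProdFinEquiv (0, j)) with hc'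
    set d : Fin k → Fin _ → M := fun i j => a (finProdFinEquiv (i.succ, j)) with hd
    have hσc : ∀ j, σ (c j) = c' j := by
      intro j
      have := hσX' (0, j)
      simpa [hblk] using this
    have hσd : ∀ i j, σ (gs i (c j)) = d i j := by
      intro i j
      have := hσX' (i.succ, j)
      simpa [hblk] using this
    have hta : tset a = tset c' ∪ Finset.univ.biUnion (fun i => tset (d i)) := by
      ext m
      simp only [tset_mem', Finset.mem_union, Finset.mem_biUnion, Finset.mem_univ,
        true_and]
      constructor
      · rintro ⟨q, rfl⟩
        obtain ⟨p, rfl⟩ := finProdFinEquiv.surjective q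
        obtain ⟨i, j⟩ := p
        rcases Fin.eq_zero_or_eq_succ i with rfl | ⟨i', rfl⟩
        · exact Or.inl ⟨j, rfl⟩
        · exact Or.inr ⟨i', j, rfl⟩
      · rintro (⟨j, rfl⟩ | ⟨i, j, rfl⟩) <;> exact ⟨_, rfl⟩
    have hindc' : indep A B (tset c') := by
      rw [hta] at hind
      exact (hswir.monotone_right A B _ _ hind).1
    obtain ⟨τ, hτG, hτBA, hτc⟩ :=
      hswir.stationary_left B A _ c c' ⟨σ, hσG, hσB, hσc⟩ (by rwa [hc]) hindc'
    have hτinv : ∀ j, τ⁻¹ (c' j) = c j := by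
      intro j; rw [← hτc j]; simp
    refine ⟨τ⁻¹ * σ, mul_mem (inv_mem hτG) hσG, ?_, ?_⟩
    · intro m hm
      rcases Finset.mem_union.1 hm with hm | hm
      · show τ⁻¹ (σ m) = m
        rw [hσB m hm]
        exact fix_inv' τ (hτBA m (Finset.mem_union_left _ hm))
      · obtain ⟨j, rfl⟩ : ∃ j, c j = m := by
          rw [← hc] at hm; exact tset_mem'.1 hm
        show τ⁻¹ (σ (c j)) = c j
        rw [hσc j, hτinv j]
    · have he_fixC : ∀ j, (τ⁻¹ * σ) (c j) = c j := by
        intro j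
        show τ⁻¹ (σ (c j)) = c j
        rw [hσc j, hτinv j]
      have hkey : ∀ i j, (τ⁻¹ * σ * gs i * (τ⁻¹ * σ)⁻¹) (c j) = τ⁻¹ (d i j) := by
        intro i j
        have h1 : (τ⁻¹ * σ)⁻¹ (c j) = c j := fix_inv' _ (he_fixC j)
        show (τ⁻¹ * σ) (gs i ((τ⁻¹ * σ)⁻¹ (c j))) = τ⁻¹ (d i j)
        rw [h1]
        show τ⁻¹ (σ (gs i (c j))) = τ⁻¹ (d i j)
        rw [hσd i j]
      have hAfix : A.image ⇑τ⁻¹ = A :=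
        image_fix' _ _ (fun m hm => fix_inv' τ (hτBA m (Finset.mem_union_right _ hm)))
      have hBfix : B.image ⇑τ⁻¹ = B :=
        image_fix' _ _ (fun m hm => fix_inv' τ (hτBA m (Finset.mem_union_left _ hm)))
      have hts : (tset a).image ⇑τ⁻¹ =
          C ∪ Finset.univ.biUnion
            (fun i => C.image ⇑(τ⁻¹ * σ * gs i * (τ⁻¹ * σ)⁻¹)) := by
        rw [hta]
        ext m
        simp only [Finset.mem_image, Finset.mem_union, Finset.mem_biUnion,
          Finset.mem_univ, true_and, tset_mem']
        constructor
        · rintro ⟨x, ⟨j, rfl⟩ | ⟨i, j, rfl⟩, rfl⟩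
          · exact Or.inl ((hτinv j).symm ▸ hcC j)
          · exact Or.inr ⟨i, c j, hcC j, hkey i j⟩
        · rintro (hm | ⟨i, x, hx, rfl⟩)
          · obtain ⟨j, rfl⟩ : ∃ j, c j = m := by
              rw [← hc] at hm; exact tset_mem'.1 hm
            exact ⟨c' j, Or.inl ⟨j, rfl⟩, hτinv j⟩
          · obtain ⟨j, rfl⟩ : ∃ j, c j = x := by
              rw [← hc] at hx; exact tset_mem'.1 hx
            exact ⟨d i j, Or.inr ⟨i, j, rfl⟩, (hkey i j).symm⟩
      have hinv := hswir.invariance τ⁻¹ (inv_mem hτG) A B (tset a) hind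
      rwa [hAfix, hBfix, hts] at hinv
  · -- the `f` part
    obtain ⟨c, hc⟩ := exists_enum' A
    have hcA : ∀ j, c j ∈ A := fun j => by rw [← hc]; exact tset_mem'.2 ⟨j, rfl⟩
    set blk : Fin (k+1) × Fin _ → M :=
      fun p => Fin.cases (c p.2) (fun i => gs i (c p.2)) p.1 with hblk
    set X : Fin ((k+1) * _) → M := blk ∘ ⇑finProdFinEquiv.symm with hX
    obtain ⟨a, ⟨σ, hσG, hσB, hσX⟩, hind⟩ := hswir.exists_right B C _ X
    have hσX' : ∀ p : Fin (k+1) × Fin _, σ (blk p) = a (finProdFinEquiv p) := by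
      intro p
      have := hσX (finProdFinEquiv p)
      simpa [hX] using this
    set c' : Fin _ → M := fun j => a (finProdFinEquiv (0, j)) with hc'
    set d : Fin k → Fin _ → M := fun i j => a (finProdFinEquiv (i.succ, j)) with hd
    have hσc : ∀ j, σ (c j) = c' j := by
      intro j
      have := hσX' (0, j)
      simpa [hblk] using this
    have hσd : ∀ i j, σ (gs i (c j)) = d i j := by
      intro i j
      have := hσX' (i.succ, j)
      simpa [hblk] using this
    have hta : tset a = tset c' ∪ Finset.univ.biUnion (fun i => tset (d i)) := by
      ext m
      simp only [tset_mem', Finset.mem_union, Finset.mem_biUnion, Finset.mem_univ,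
        true_and]
      constructor
      · rintro ⟨q, rfl⟩
        obtain ⟨p, rfl⟩ := finProdFinEquiv.surjective q
        obtain ⟨i, j⟩ := p
        rcases Fin.eq_zero_or_eq_succ i with rfl | ⟨i', rfl⟩
        · exact Or.inl ⟨j, rfl⟩
        · exact Or.inr ⟨i', j, rfl⟩
      · rintro (⟨j, rfl⟩ | ⟨i, j, rfl⟩) <;> exact ⟨_, rfl⟩
    have hindc' : indep (tset c') B C := by
      rw [hta] at hind
      exact (hswir.monotone_left _ B C _ hind).1
    obtain ⟨τ, hτG, hτBC, hτc⟩ :=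
      hswir.stationary_right B C _ c c' ⟨σ, hσG, hσB, hσc⟩ (by rwa [hc]) hindc'
    have hτinv : ∀ j, τ⁻¹ (c' j) = c j := by
      intro j; rw [← hτc j]; simp
    refine ⟨τ⁻¹ * σ, mul_mem (inv_mem hτG) hσG, ?_, ?_⟩
    · intro m hm
      rcases Finset.mem_union.1 hm with hm | hm
      · obtain ⟨j, rfl⟩ : ∃ j, c j = m := by
          rw [← hc] at hm; exact tset_mem'.1 hm
        show τ⁻¹ (σ (c j)) = c j
        rw [hσc j, hτinv j]
      · show τ⁻¹ (σ m) = m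
        rw [hσB m hm]
        exact fix_inv' τ (hτBC m (Finset.mem_union_left _ hm))
    · have he_fixA : ∀ j, (τ⁻¹ * σ) (c j) = c j := by
        intro j
        show τ⁻¹ (σ (c j)) = c j
        rw [hσc j, hτinv j]
      have hkey : ∀ i j, (τ⁻¹ * σ * gs i * (τ⁻¹ * σ)⁻¹) (c j) = τ⁻¹ (d i j) := by
        intro i j
        have h1 : (τ⁻¹ * σ)⁻¹ (c j) = c j := fix_inv' _ (he_fixA j)
        show (τ⁻¹ * σ) (gs i ((τ⁻¹ * σ)⁻¹ (c j))) = τ⁻¹ (d i j)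
        rw [h1]
        show τ⁻¹ (σ (gs i (c j))) = τ⁻¹ (d i j)
        rw [hσd i j]
      have hBfix : B.image ⇑τ⁻¹ = B :=
        image_fix' _ _ (fun m hm => fix_inv' τ (hτBC m (Finset.mem_union_left _ hm)))
      have hCfix : C.image ⇑τ⁻¹ = C :=
        image_fix' _ _ (fun m hm => fix_inv' τ (hτBC m (Finset.mem_union_right _ hm)))
      have hts : (tset a).image ⇑τ⁻¹ =
          A ∪ Finset.univ.biUnion
            (fun i => A.image ⇑(τ⁻¹ * σ * gs i * (τ⁻¹ * σ)⁻¹)) := by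
        rw [hta]
        ext m
        simp only [Finset.mem_image, Finset.mem_union, Finset.mem_biUnion,
          Finset.mem_univ, true_and, tset_mem']
        constructor
        · rintro ⟨x, ⟨j, rfl⟩ | ⟨i, j, rfl⟩, rfl⟩
          · exact Or.inl ((hτinv j).symm ▸ hcA j)
          · exact Or.inr ⟨i, c j, hcA j, hkey i j⟩
        · rintro (hm | ⟨i, x, hx, rfl⟩)
          · obtain ⟨j, rfl⟩ : ∃ j, c j = m := by
              rw [← hc] at hm; exact tset_mem'.1 hm
            exact ⟨c' j, Or.inl ⟨j, rfl⟩, hτinv j⟩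
          · obtain ⟨j, rfl⟩ : ∃ j, c j = x := by
              rw [← hc] at hx; exact tset_mem'.1 hx
            exact ⟨d i j, Or.inr ⟨i, j, rfl⟩, (hkey i j).symm⟩
      have hinv := hswir.invariance τ⁻¹ (inv_mem hτG) (tset a) B C hind
      rwa [hBfix, hCfix, hts] at hinv
end

section
/- Let M be a countable homogeneous structure with a stationary weak independence relation ⫫, and suppose g ∈ Aut(M) moves almost L-maximally. Let X, Y, C be finite sets with g(X) = Y and X ⫫_Y C, and let x be a finite tuple. Then there exists a ∈ Aut(M) fixing X ∪ Y pointwise such that g^a(x) ⫫_Y C, where g^a = a g a⁻¹. -/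
variable {M : Type*} [DecidableEq M]

lemma tset_map {M : Type*} [DecidableEq M] {n : ℕ} (f : Equiv.Perm M) (w : Fin n → M) :
    tset (fun i => f (w i)) = (tset w).image f := by
  simp only [tset, Finset.image_image]
  rfl

lemma tset_append {M : Type*} [DecidableEq M] {n k : ℕ} (x : Fin n → M) (c : Fin k → M) :
    tset (Fin.append x c) = tset x ∪ tset c := by
  ext m
  simp only [tset, Finset.mem_image, Finset.mem_union, Finset.mem_univ, true_and]
  constructor
  · rintro ⟨i, rfl⟩
    induction i using Fin.addCases with
    | left j => exact Or.inl ⟨j, by rw [Fin.append_left]⟩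
    | right j => exact Or.inr ⟨j, by rw [Fin.append_right]⟩
  · rintro (⟨j, rfl⟩ | ⟨j, rfl⟩)
    · exact ⟨Fin.castAdd k j, Fin.append_left x c j⟩
    · exact ⟨Fin.natAdd n j, Fin.append_right x c j⟩

lemma tset_toList_get {M : Type*} [DecidableEq M] (C : Finset M) :
    tset (fun i : Fin C.toList.length => C.toList.get i) = C := by
  ext m
  simp only [tset, Finset.mem_image, Finset.mem_univ, true_and]
  rw [← Finset.mem_toList, List.mem_iff_get]

/-- Lemma 2.7 (Lemma 3.5 of Tent–Ziegler, asymmetric form): if `g` moves almost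
L-maximally, `g(X) = Y`, `X ⫫_Y C` and `x` is a tuple, then there is `a ∈ Aut(M)`
fixing `X ∪ Y` pointwise with `gᵃ(x) ⫫_Y C`. -/
theorem swir_move_tuple {M : Type*} [DecidableEq M] [Countable M]
    (G : Subgroup (Equiv.Perm M)) (indep : Finset M → Finset M → Finset M → Prop)
    (hswir : IsSWIR G indep) (g : Equiv.Perm M) (hg : g ∈ G)
    (hL : MovesAlmostLMax G indep g)
    (X Y C : Finset M) (hXY : X.image ⇑g = Y) (hind : indep X Y C)
    (n : ℕ) (x : Fin n → M) :
    ∃ a ∈ G, (∀ m ∈ X ∪ Y, a m = m) ∧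
      indep (tset (fun i => (a * g * a⁻¹) (x i))) Y C := by
  classical
  set k := C.toList.length with hk
  set c : Fin k → M := fun i => C.toList.get i with hc
  set z : Fin (n + k) → M := Fin.append x c with hz
  obtain ⟨a, ⟨h, hG, hfix, hmap⟩, hind2⟩ := hL (X ∪ Y) (n + k) z
  have ha : a = fun i => h (z i) := funext fun i => (hmap i).symm
  rw [ha] at hind2
  have htz : tset z = tset x ∪ C := by rw [hz, tset_append, tset_toList_get]
  have e1 : (tset fun i => h (z i)) = (tset x).image h ∪ C.image h := by
    rw [tset_map, htz, Finset.image_union]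
  have e2 : (tset fun i => g (h (z i)))
      = ((tset x).image h).image g ∪ (C.image h).image g := by
    rw [tset_map (w := fun i => h (z i)), tset_map, htz, Finset.image_union,
      Finset.image_union]
  rw [e1, e2] at hind2
  set Sgx' := ((tset x).image h).image g with hSgx'
  set C' := C.image ⇑h with hC'
  have h3 : indep Sgx' (X ∪ Y) ((tset x).image ⇑h ∪ C') :=
    (hswir.monotone_left Sgx' (X ∪ Y) ((tset x).image ⇑h ∪ C') (C'.image g) hind2).1
  rw [Finset.union_comm ((tset x).image ⇑h) C'] at h3
  have h4 : indep Sgx' (X ∪ Y) C' :=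
    (hswir.monotone_right Sgx' (X ∪ Y) C' ((tset x).image ⇑h) h3).1
  have imgX : X.image ⇑h = X := by
    rw [Finset.image_congr (g := id) fun b hb => hfix b (Finset.mem_union_left _ hb)]
    exact Finset.image_id
  have imgY : Y.image ⇑h = Y := by
    rw [Finset.image_congr (g := id) fun b hb => hfix b (Finset.mem_union_right _ hb)]
    exact Finset.image_id
  have h5 : indep X Y C' := by
    have := hswir.invariance h hG X Y C hind
    rwa [imgX, imgY] at this
  have h6 : indep Sgx' Y C' := hswir.trans_left X Y C' Sgx' h5 h4
  have h7 := hswir.invariance h⁻¹ (G.inv_mem hG) Sgx' Y C' h6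
  have imgYinv : Y.image ⇑h⁻¹ = Y := by
    rw [Finset.image_congr (g := id) (fun b hb => ?_)]
    · exact Finset.image_id
    · have hb' : h b = b := hfix b (Finset.mem_union_right _ hb)
      simp only [id]
      conv_lhs => rw [← hb']
      exact Equiv.symm_apply_apply h b
  have imgCinv : C'.image ⇑h⁻¹ = C := by
    rw [hC', Finset.image_image]
    have : (⇑h⁻¹ ∘ ⇑h) = id := by
      ext m; exact Equiv.symm_apply_apply h m
    rw [this, Finset.image_id]
  rw [imgYinv, imgCinv] at h7
  refine ⟨h⁻¹, G.inv_mem hG, fun m hm => ?_, ?_⟩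
  · have hm' : h m = m := hfix m hm
    conv_lhs => rw [← hm']
    exact Equiv.symm_apply_apply h m
  · have e3 : (tset fun i => (h⁻¹ * g * h⁻¹⁻¹) (x i)) = Sgx'.image ⇑h⁻¹ := by
      simp only [inv_inv, Equiv.Perm.mul_apply]
      rw [tset_map (f := h⁻¹) (w := fun i => g (h (x i))),
        tset_map (f := g) (w := fun i => h (x i)), tset_map]
    rw [e3]
    exact h7
end

section
/- Let M be a countable homogeneous structure with a stationary weak independence relation ⫫, and suppose g ∈ Aut(M) moves almost R-maximally. Let X, Y be finite sets with g(X) = Y, and let x, y be tuples satisfying g(tp(x/X)) = tp(y/Y), x ⫫_X (y ∪ Y), and y ⫫_Y X. Then there exists a ∈ Aut(M) fixing X ∪ Y pointwise such that g^a(x) = y. -/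
variable {M : Type*} [DecidableEq M]

section SwirHelpers
variable {M : Type*} [DecidableEq M]

lemma tset_image' {n : ℕ} {k : Equiv.Perm M} {u v : Fin n → M}
    (h : ∀ i, k (u i) = v i) : (tset u).image ⇑k = tset v := by
  unfold tset
  rw [Finset.image_image]
  exact Finset.image_congr fun i _ => h i

lemma image_fix'_s8 {B : Finset M} {k : Equiv.Perm M} (hf : ∀ b ∈ B, k b = b) :
    B.image ⇑k = B := by
  have h : B.image ⇑k = B.image id := Finset.image_congr fun b hb => hf b hb
  rw [h, Finset.image_id]

lemma sto_symm {G : Subgroup (Equiv.Perm M)} {B : Finset M} {n : ℕ} {x y : Fin n → M}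
    (h : SameTypeOver G B x y) : SameTypeOver G B y x := by
  obtain ⟨k, hkG, hkB, hk⟩ := h
  refine ⟨k⁻¹, inv_mem hkG, fun b hb => ?_, fun i => ?_⟩
  · conv_lhs => rw [← hkB b hb]
    simp
  · rw [← hk i]; simp

lemma sto_trans {G : Subgroup (Equiv.Perm M)} {B : Finset M} {n : ℕ} {x y z : Fin n → M}
    (h1 : SameTypeOver G B x y) (h2 : SameTypeOver G B y z) : SameTypeOver G B x z := by
  obtain ⟨k, hkG, hkB, hk⟩ := h1
  obtain ⟨l, hlG, hlB, hl⟩ := h2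
  exact ⟨l * k, mul_mem hlG hkG,
    fun b hb => by simp [Equiv.Perm.mul_apply, hkB b hb, hlB b hb],
    fun i => by simp [Equiv.Perm.mul_apply, hk i, hl i]⟩

lemma sto_mono {G : Subgroup (Equiv.Perm M)} {B B' : Finset M} {n : ℕ} {x y : Fin n → M}
    (hBB : B ⊆ B') (h : SameTypeOver G B' x y) : SameTypeOver G B x y := by
  obtain ⟨k, hkG, hkB, hk⟩ := h
  exact ⟨k, hkG, fun b hb => hkB b (hBB hb), hk⟩

end SwirHelpers

/-- Lemma 2.8 (Lemma 3.6 of Tent–Ziegler, asymmetric form): if `g` moves almost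
R-maximally, `g(X) = Y`, `g(tp(x/X)) = tp(y/Y)`, `x ⫫_X yY` and `y ⫫_Y X`, then
there is `a ∈ Aut(M)` fixing `X ∪ Y` pointwise with `gᵃ(x) = y`. -/
theorem swir_match_tuple {M : Type*} [DecidableEq M] [Countable M]
    (G : Subgroup (Equiv.Perm M)) (indep : Finset M → Finset M → Finset M → Prop)
    (hswir : IsSWIR G indep) (g : Equiv.Perm M) (hg : g ∈ G)
    (hR : MovesAlmostRMax G indep g)
    (X Y : Finset M) (hXY : X.image ⇑g = Y)
    (n : ℕ) (x y : Fin n → M)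
    (htp : SameTypeOver G Y (fun i => g (x i)) y)
    (h1 : indep (tset x) X (tset y ∪ Y)) (h2 : indep (tset y) Y X) :
    ∃ a ∈ G, (∀ m ∈ X ∪ Y, a m = m) ∧ ∀ i, (a * g * a⁻¹) (x i) = y i := by
  classical
  -- Decompose h1
  have h1' : indep (tset x) X (Y ∪ tset y) := by rwa [Finset.union_comm] at h1
  obtain ⟨hxY, hxy⟩ := hswir.monotone_right (tset x) X Y (tset y) h1'
  -- Step 1: z₁ ≡_{XY} x with z₁ ⫫_{XY} g⁻¹X
  obtain ⟨z₁, hz₁t, hz₁i⟩ := hswir.exists_right (X ∪ Y) (X.image ⇑g⁻¹) n x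
  -- Step 2: z ≡_{XY∪g⁻¹X} z₁ with z ⫫_{XY∪g⁻¹X} gz
  obtain ⟨z, hzt, hzi⟩ := hR (X ∪ Y ∪ X.image ⇑g⁻¹) n z₁
  obtain ⟨k, hkG, hkfix, hkz⟩ := hzt
  have hkX : ∀ b ∈ X, k b = b := fun b hb => hkfix b (by simp [Finset.mem_union, hb])
  have hkY : ∀ b ∈ Y, k b = b := fun b hb => hkfix b (by simp [Finset.mem_union, hb])
  have hkP : ∀ b ∈ X.image ⇑g⁻¹, k b = b := fun b hb =>
    hkfix b (Finset.mem_union_right _ hb)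
  have hkXY : ∀ b ∈ X ∪ Y, k b = b := fun b hb =>
    hkfix b (Finset.mem_union_left _ hb)
  -- transfer z₁ ⫫_{XY} g⁻¹X to z
  have hz_g : indep (tset z) (X ∪ Y) (X.image ⇑g⁻¹) := by
    have h' := hswir.invariance k hkG _ _ _ hz₁i
    rwa [tset_image' hkz, Finset.image_union, image_fix'_s8 hkX, image_fix'_s8 hkY,
      image_fix'_s8 hkP] at h'
  -- z ⫫_{XY} gz
  have hzgz : indep (tset z) (X ∪ Y) (tset (fun i => g (z i))) :=
    hswir.trans_right (tset z) (X ∪ Y) (X.image ⇑g⁻¹) _ hz_g hzi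
  -- x ≡_{XY} z
  have hxz : SameTypeOver G (X ∪ Y) x z :=
    sto_trans hz₁t ⟨k, hkG, hkXY, hkz⟩
  -- z ⫫_X Y
  have hzY : indep (tset z) X Y := by
    obtain ⟨l, hlG, hlB, hl⟩ := hxz
    have h' := hswir.invariance l hlG _ _ _ hxY
    rwa [tset_image' hl,
      image_fix'_s8 (fun b hb => hlB b (Finset.mem_union_left _ hb)),
      image_fix'_s8 (fun b hb => hlB b (Finset.mem_union_right _ hb))] at h'
  -- z ⫫_X g⁻¹X
  have hzP : indep (tset z) X (X.image ⇑g⁻¹) :=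
    hswir.trans_right (tset z) X Y _ hzY hz_g
  -- gz ⫫_Y X  (apply g)
  have hgzX : indep (tset (fun i => g (z i))) Y X := by
    have h' := hswir.invariance g hg _ _ _ hzP
    have h1'' : (tset z).image ⇑g = tset (fun i => g (z i)) := tset_image' fun i => rfl
    have h2'' : (X.image ⇑g⁻¹).image ⇑g = X := by
      rw [Finset.image_image]
      have : (⇑g ∘ ⇑g⁻¹) = id := by ext a; simp
      rw [this, Finset.image_id]
    rwa [h1'', hXY, h2''] at h'
  -- gz ≡_Y gx ≡_Y y
  have hgx_gz : SameTypeOver G Y (fun i => g (x i)) (fun i => g (z i)) := by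
    obtain ⟨l, hlG, hlB, hl⟩ := sto_mono Finset.subset_union_left hxz
    refine ⟨g * l * g⁻¹, mul_mem (mul_mem hg hlG) (inv_mem hg), fun b hb => ?_, fun i => ?_⟩
    · rw [← hXY] at hb
      obtain ⟨c, hc, rfl⟩ := Finset.mem_image.mp hb
      simp [Equiv.Perm.mul_apply, hlB c hc]
    · simp [Equiv.Perm.mul_apply, hl i]
  have hgz_y : SameTypeOver G Y (fun i => g (z i)) y := sto_trans (sto_symm hgx_gz) htp
  -- stationarity over Y, adding X
  have hgz_yXY : SameTypeOver G (X ∪ Y) (fun i => g (z i)) y := by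
    have := hswir.stationary_right Y X n (fun i => g (z i)) y hgz_y hgzX h2
    rwa [Finset.union_comm] at this
  -- h : fixes XY, h z = x
  obtain ⟨h, hhG, hhfix, hhz⟩ := sto_symm hxz
  set w : Fin n → M := fun i => h (g (z i)) with hw
  have hw_gz : SameTypeOver G (X ∪ Y) (fun i => g (z i)) w := ⟨h, hhG, hhfix, fun i => rfl⟩
  have hwy : SameTypeOver G (X ∪ Y) w y := sto_trans (sto_symm hw_gz) hgz_yXY
  -- x ⫫_{XY} w
  have hxw : indep (tset x) (X ∪ Y) (tset w) := by
    have h' := hswir.invariance h hhG _ _ _ hzgz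
    rwa [tset_image' hhz, Finset.image_union,
      image_fix'_s8 (fun b hb => hhfix b (Finset.mem_union_left _ hb)),
      image_fix'_s8 (fun b hb => hhfix b (Finset.mem_union_right _ hb)),
      tset_image' (fun i => rfl : ∀ i, h (g (z i)) = w i)] at h'
  -- stationarity over XY, adding tset x
  obtain ⟨f, hfG, hffix, hfw⟩ :=
    hswir.stationary_left (X ∪ Y) (tset x) n w y hwy hxw hxy
  -- final automorphism
  refine ⟨f * h, mul_mem hfG hhG, fun m hm => ?_, fun i => ?_⟩
  · simp only [Equiv.Perm.mul_apply, hhfix m hm]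
    exact hffix m (Finset.mem_union_left _ hm)
  · have hfx : ∀ j, f (x j) = x j := fun j =>
      hffix (x j) (Finset.mem_union_right _ (Finset.mem_image_of_mem x (Finset.mem_univ j)))
    have haz : (f * h) (z i) = x i := by
      simp [Equiv.Perm.mul_apply, hhz i, hfx i]
    have hinv : (f * h)⁻¹ (x i) = z i := by
      rw [← haz]; simp
    simp only [Equiv.Perm.mul_apply, hinv]
    exact hfw i
end

section
/- Let M be a countable homogeneous structure with a stationary weak independence relation. Let g₁, g₂, g₃, g₄ ∈ Aut(M) with g₁ and g₄⁻¹ moving almost L-maximally and g₂⁻¹ and g₃ moving almost R-maximally. Let Y₀, ..., Y₄ be finite sets with g_i(Y_{i-1}) = Y_i for i = 1,...,4, and suppose Y₀ ⫫_{Y₁} Y₂ and Y₄ ⫫_{Y₃} Y₂. Let x₀, x₄ be tuples such that g₄g₃g₂g₁ maps tp(x₀/Y₀) to tp(x₄/Y₄). Then for i = 1,...,4 there exist a_i ∈ Aut(M) fixing Y_{i-1} ∪ Y_i pointwise such that g₄^{a₄} g₃^{a₃} g₂^{a₂} g₁^{a₁}(x₀) = x₄. -/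
variable {M : Type*} [DecidableEq M]

/-! ### Auxiliary lemmas -/

@[simp] theorem Equiv.Perm.inv_apply_self {α : Type*} (f : Equiv.Perm α) (x : α) :
    f⁻¹ (f x) = x := f.symm_apply_apply x

@[simp] theorem Equiv.Perm.apply_inv_self {α : Type*} (f : Equiv.Perm α) (x : α) :
    f (f⁻¹ x) = x := f.apply_symm_apply x

section Aux

variable {G : Subgroup (Equiv.Perm M)}
variable {indep : Finset M → Finset M → Finset M → Prop}

lemma mem_tset {n : ℕ} (x : Fin n → M) (i : Fin n) : x i ∈ tset x :=
  Finset.mem_image_of_mem x (Finset.mem_univ i)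

lemma tset_comp {n : ℕ} (g : Equiv.Perm M) (x : Fin n → M) :
    tset (fun i => g (x i)) = (tset x).image ⇑g := by
  simp only [tset, Finset.image_image]
  rfl

lemma fix_inv {σ : Equiv.Perm M} {s : Finset M} (h : ∀ m ∈ s, σ m = m) :
    ∀ m ∈ s, σ⁻¹ m = m := by
  intro m hm
  conv_lhs => rw [← h m hm]
  exact Equiv.Perm.inv_apply_self σ m

lemma image_fix {σ : Equiv.Perm M} {s : Finset M} (h : ∀ m ∈ s, σ m = m) :
    s.image ⇑σ = s := by
  ext a
  simp only [Finset.mem_image]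
  constructor
  · rintro ⟨b, hb, rfl⟩
    rw [h b hb]; exact hb
  · intro ha; exact ⟨a, ha, h a ha⟩

lemma himg (g : Equiv.Perm M) {s t : Finset M} (h : s.image ⇑g = t) :
    t.image ⇑g⁻¹ = s := by
  subst h
  rw [Finset.image_image]
  have : (⇑g⁻¹ ∘ ⇑g) = id := funext fun m => Equiv.Perm.inv_apply_self g m
  rw [this, Finset.image_id]

lemma stoSymm {B : Finset M} {n : ℕ} {x y : Fin n → M}
    (h : SameTypeOver G B x y) : SameTypeOver G B y x := by
  obtain ⟨g, hg, hfix, hmap⟩ := h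
  refine ⟨g⁻¹, G.inv_mem hg, fix_inv hfix, fun i => ?_⟩
  rw [← hmap i]
  exact Equiv.Perm.inv_apply_self g _

lemma stoTrans {B : Finset M} {n : ℕ} {x y z : Fin n → M}
    (h1 : SameTypeOver G B x y) (h2 : SameTypeOver G B y z) :
    SameTypeOver G B x z := by
  obtain ⟨g, hg, hfix, hmap⟩ := h1
  obtain ⟨g', hg', hfix', hmap'⟩ := h2
  refine ⟨g' * g, G.mul_mem hg' hg, fun b hb => ?_, fun i => ?_⟩
  · rw [Equiv.Perm.mul_apply, hfix b hb, hfix' b hb]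
  · rw [Equiv.Perm.mul_apply, hmap i, hmap' i]

lemma stoMono {B B' : Finset M} (hs : B' ⊆ B) {n : ℕ} {x y : Fin n → M}
    (h : SameTypeOver G B x y) : SameTypeOver G B' x y := by
  obtain ⟨g, hg, hfix, hmap⟩ := h
  exact ⟨g, hg, fun b hb => hfix b (hs hb), hmap⟩

lemma stoConj (g : Equiv.Perm M) (hg : g ∈ G) {B : Finset M} {n : ℕ}
    {x y : Fin n → M} (h : SameTypeOver G B x y) :
    SameTypeOver G (B.image ⇑g) (fun i => g (x i)) (fun i => g (y i)) := by
  obtain ⟨d, hd, hfix, hmap⟩ := h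
  refine ⟨g * d * g⁻¹, G.mul_mem (G.mul_mem hg hd) (G.inv_mem hg), ?_, ?_⟩
  · intro b hb
    obtain ⟨a, ha, rfl⟩ := Finset.mem_image.mp hb
    rw [Equiv.Perm.mul_apply, Equiv.Perm.mul_apply, Equiv.Perm.inv_apply_self,
      hfix a ha]
  · intro i
    rw [Equiv.Perm.mul_apply, Equiv.Perm.mul_apply, Equiv.Perm.inv_apply_self,
      hmap i]

/-- Conjugating `g` by an automorphism fixing `Y ∪ Y'` pointwise does not change the
induced map on types over `Y'` (where `Y' = g(Y)`). -/
lemma conjStep (g a : Equiv.Perm M) (hg : g ∈ G) (ha : a ∈ G)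
    (Y Y' : Finset M) (hYY' : Y.image ⇑g = Y')
    (hfixY : ∀ m ∈ Y, a m = m) (hfixY' : ∀ m ∈ Y', a m = m)
    {n : ℕ} (x : Fin n → M) :
    SameTypeOver G Y' (fun i => g (x i)) (fun i => a (g (a⁻¹ (x i)))) := by
  refine ⟨a * g * a⁻¹ * g⁻¹,
    G.mul_mem (G.mul_mem (G.mul_mem ha hg) (G.inv_mem ha)) (G.inv_mem hg), ?_, ?_⟩
  · intro m hm
    rw [← hYY'] at hm
    obtain ⟨y, hy, rfl⟩ := Finset.mem_image.mp hm
    rw [Equiv.Perm.mul_apply, Equiv.Perm.mul_apply, Equiv.Perm.mul_apply,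
      Equiv.Perm.inv_apply_self, fix_inv hfixY y hy, hfixY' (g y)]
    rw [← hYY']
    exact Finset.mem_image_of_mem _ hy
  · intro i
    rw [Equiv.Perm.mul_apply, Equiv.Perm.mul_apply, Equiv.Perm.mul_apply,
      Equiv.Perm.inv_apply_self]

lemma IsSWIR.monoL (h : IsSWIR G indep) {A B C U : Finset M}
    (hi : indep U B C) (hs : A ⊆ U) : indep A B C := by
  have hu : A ∪ U = U := Finset.union_eq_right.mpr hs
  exact (h.monotone_left A B C U (by rwa [hu])).1

lemma IsSWIR.monoR (h : IsSWIR G indep) {A B D U : Finset M}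
    (hi : indep A B U) (hs : D ⊆ U) : indep A B D := by
  have hu : D ∪ U = U := Finset.union_eq_right.mpr hs
  exact (h.monotone_right A B D U (by rwa [hu])).1

lemma IsSWIR.monoR' (h : IsSWIR G indep) {A B C D U : Finset M}
    (hi : indep A B U) (hC : C ⊆ U) (hD : D ⊆ U) : indep A (B ∪ C) D := by
  have h1 : indep A B (C ∪ D) := h.monoR hi (Finset.union_subset hC hD)
  exact (h.monotone_right A B C D h1).2

end Aux

/-- Proposition 2.9 (Proposition 3.4 of Tent–Ziegler, asymmetric form). -/
theorem swir_four_step {M : Type*} [DecidableEq M] [Countable M]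
    (G : Subgroup (Equiv.Perm M)) (indep : Finset M → Finset M → Finset M → Prop)
    (hswir : IsSWIR G indep)
    (g1 g2 g3 g4 : Equiv.Perm M)
    (hg1 : g1 ∈ G) (hg2 : g2 ∈ G) (hg3 : g3 ∈ G) (hg4 : g4 ∈ G)
    (hL1 : MovesAlmostLMax G indep g1) (hL4 : MovesAlmostLMax G indep g4⁻¹)
    (hR2 : MovesAlmostRMax G indep g2⁻¹) (hR3 : MovesAlmostRMax G indep g3)
    (Y0 Y1 Y2 Y3 Y4 : Finset M)
    (e1 : Y0.image ⇑g1 = Y1) (e2 : Y1.image ⇑g2 = Y2)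
    (e3 : Y2.image ⇑g3 = Y3) (e4 : Y3.image ⇑g4 = Y4)
    (i1 : indep Y0 Y1 Y2) (i2 : indep Y4 Y3 Y2)
    (n : ℕ) (x0 x4 : Fin n → M)
    (htp : SameTypeOver G Y4 (fun i => (g4 * g3 * g2 * g1) (x0 i)) x4) :
    ∃ a1 ∈ G, ∃ a2 ∈ G, ∃ a3 ∈ G, ∃ a4 ∈ G,
      (∀ m ∈ Y0 ∪ Y1, a1 m = m) ∧ (∀ m ∈ Y1 ∪ Y2, a2 m = m) ∧
      (∀ m ∈ Y2 ∪ Y3, a3 m = m) ∧ (∀ m ∈ Y3 ∪ Y4, a4 m = m) ∧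
      ∀ i, ((a4 * g4 * a4⁻¹) * (a3 * g3 * a3⁻¹) * (a2 * g2 * a2⁻¹) *
        (a1 * g1 * a1⁻¹)) (x0 i) = x4 i := by
  classical
  -- an enumeration of Y2
  obtain ⟨k, e0, he0⟩ : ∃ (k : ℕ) (e : Fin k → M), tset e = Y2 := by
    refine ⟨Y2.card, fun i => (Y2.equivFin.symm i : M), ?_⟩
    ext m
    simp only [tset, Finset.mem_image, Finset.mem_univ, true_and]
    constructor
    · rintro ⟨i, rfl⟩
      exact (Y2.equivFin.symm i).2
    · intro hm
      exact ⟨Y2.equivFin ⟨m, hm⟩, by simp⟩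
  -- some useful image facts
  have e1' : Y1.image ⇑g1⁻¹ = Y0 := himg g1 e1
  have e2' : Y2.image ⇑g2⁻¹ = Y1 := himg g2 e2
  have e3' : Y3.image ⇑g3⁻¹ = Y2 := himg g3 e3
  have e4' : Y4.image ⇑g4⁻¹ = Y3 := himg g4 e4
  ------------------------------------------------------------------
  -- STEP 1 : free image of x0 under a conjugate of g1
  ------------------------------------------------------------------
  set t0 : Fin (n + k) → M := Fin.append x0 e0 with ht0
  obtain ⟨u1, hu1T, hu1I⟩ := hL1 (Y0 ∪ Y1) (n + k) t0
  obtain ⟨b1, hb1G, hb1fix, hb1map⟩ := hu1T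
  set x1 : Fin n → M := fun i => b1⁻¹ (g1 (b1 (x0 i))) with hx1
  -- transported independence fact
  have hF1a : indep (tset (fun j => b1⁻¹ (g1 (u1 j)))) (Y0 ∪ Y1)
      (tset (fun j => b1⁻¹ (u1 j))) := by
    have h := hswir.invariance b1⁻¹ (G.inv_mem hb1G) _ _ _ hu1I
    rwa [← tset_comp, ← tset_comp, image_fix (fix_inv hb1fix)] at h
  have hback : (fun j => b1⁻¹ (u1 j)) = t0 := by
    funext j
    rw [← hb1map j, Equiv.Perm.inv_apply_self]
  rw [hback] at hF1a
  -- tset inclusions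
  have hsub1 : tset x1 ⊆ tset (fun j => b1⁻¹ (g1 (u1 j))) := by
    intro m hm
    obtain ⟨i, -, rfl⟩ := Finset.mem_image.mp hm
    refine Finset.mem_image.mpr ⟨Fin.castAdd k i, Finset.mem_univ _, ?_⟩
    have : u1 (Fin.castAdd k i) = b1 (x0 i) := by
      rw [← hb1map, ht0, Fin.append_left]
    rw [this]
  have hsub2 : Y2 ⊆ tset t0 := by
    intro m hm
    rw [← he0] at hm
    obtain ⟨i, -, rfl⟩ := Finset.mem_image.mp hm
    refine Finset.mem_image.mpr ⟨Fin.natAdd n i, Finset.mem_univ _, ?_⟩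
    rw [ht0, Fin.append_right]
  have hx1Y2 : indep (tset x1) (Y0 ∪ Y1) Y2 :=
    hswir.monoR (hswir.monoL hF1a hsub1) hsub2
  -- the key use of i1
  have hx1i1 : indep (tset x1) Y1 Y2 :=
    hswir.trans_left Y0 Y1 Y2 (tset x1) i1 hx1Y2
  -- type transport for step 1
  have hT1 : SameTypeOver G Y1 (fun i => g1 (x0 i)) x1 := by
    have h := conjStep (G := G) g1 b1⁻¹ hg1 (G.inv_mem hb1G) Y0 Y1 e1
      (fun m hm => fix_inv hb1fix m (Finset.mem_union_left _ hm))
      (fun m hm => fix_inv hb1fix m (Finset.mem_union_right _ hm)) x0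
    simpa only [inv_inv] using h
  ------------------------------------------------------------------
  -- STEP 4 : free preimage of x4 under a conjugate of g4
  ------------------------------------------------------------------
  set t4 : Fin (n + k) → M := Fin.append x4 e0 with ht4
  obtain ⟨u4, hu4T, hu4I⟩ := hL4 (Y3 ∪ Y4) (n + k) t4
  obtain ⟨b4, hb4G, hb4fix, hb4map⟩ := hu4T
  set x3 : Fin n → M := fun i => b4⁻¹ (g4⁻¹ (b4 (x4 i))) with hx3
  have hF4a : indep (tset (fun j => b4⁻¹ (g4⁻¹ (u4 j)))) (Y3 ∪ Y4)
      (tset (fun j => b4⁻¹ (u4 j))) := by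
    have h := hswir.invariance b4⁻¹ (G.inv_mem hb4G) _ _ _ hu4I
    rwa [← tset_comp, ← tset_comp, image_fix (fix_inv hb4fix)] at h
  have hback4 : (fun j => b4⁻¹ (u4 j)) = t4 := by
    funext j
    rw [← hb4map j, Equiv.Perm.inv_apply_self]
  rw [hback4] at hF4a
  have hsub41 : tset x3 ⊆ tset (fun j => b4⁻¹ (g4⁻¹ (u4 j))) := by
    intro m hm
    obtain ⟨i, -, rfl⟩ := Finset.mem_image.mp hm
    refine Finset.mem_image.mpr ⟨Fin.castAdd k i, Finset.mem_univ _, ?_⟩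
    have : u4 (Fin.castAdd k i) = b4 (x4 i) := by
      rw [← hb4map, ht4, Fin.append_left]
    rw [this]
  have hsub42 : Y2 ⊆ tset t4 := by
    intro m hm
    rw [← he0] at hm
    obtain ⟨i, -, rfl⟩ := Finset.mem_image.mp hm
    refine Finset.mem_image.mpr ⟨Fin.natAdd n i, Finset.mem_univ _, ?_⟩
    rw [ht4, Fin.append_right]
  have hx3Y2 : indep (tset x3) (Y3 ∪ Y4) Y2 :=
    hswir.monoR (hswir.monoL hF4a hsub41) hsub42
  have hx3Y2' : indep (tset x3) (Y4 ∪ Y3) Y2 := by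
    rwa [Finset.union_comm Y3 Y4] at hx3Y2
  -- the key use of i2
  have hx3i2 : indep (tset x3) Y3 Y2 :=
    hswir.trans_left Y4 Y3 Y2 (tset x3) i2 hx3Y2'
  -- type transport for step 4
  have hT4 : SameTypeOver G Y3 (fun i => g4⁻¹ (x4 i)) x3 := by
    have h := conjStep (G := G) g4⁻¹ b4⁻¹ (G.inv_mem hg4) (G.inv_mem hb4G) Y4 Y3 e4'
      (fun m hm => fix_inv hb4fix m (Finset.mem_union_right _ hm))
      (fun m hm => fix_inv hb4fix m (Finset.mem_union_left _ hm)) x4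
    simpa only [inv_inv] using h
  ------------------------------------------------------------------
  -- choice of x2
  ------------------------------------------------------------------
  set C2 : Finset M :=
    Y1 ∪ Y2.image ⇑g2 ∪ Y3 ∪ Y2.image ⇑g3⁻¹ ∪ tset x1 ∪ tset x3 with hC2
  obtain ⟨x2, hx2T, hx2I⟩ := hswir.exists_right Y2 C2 n (fun i => g2 (x1 i))
  have hsY1 : Y1 ⊆ C2 := by
    rw [hC2]; intro m hm; simp only [Finset.mem_union]; tauto
  have hsg2Y2 : Y2.image ⇑g2 ⊆ C2 := by
    rw [hC2]; intro m hm; simp only [Finset.mem_union]; tauto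
  have hsY3 : Y3 ⊆ C2 := by
    rw [hC2]; intro m hm; simp only [Finset.mem_union]; tauto
  have hsg3Y2 : Y2.image ⇑g3⁻¹ ⊆ C2 := by
    rw [hC2]; intro m hm; simp only [Finset.mem_union]; tauto
  have hsx1 : tset x1 ⊆ C2 := by
    rw [hC2]; intro m hm; simp only [Finset.mem_union]; tauto
  have hsx3 : tset x3 ⊆ C2 := by
    rw [hC2]; intro m hm; simp only [Finset.mem_union]; tauto
  have hF2a : indep (tset x2) (Y1 ∪ Y2) (tset x1) := by
    have h := hswir.monoR' hx2I hsY1 hsx1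
    rwa [Finset.union_comm Y2 Y1] at h
  have hF2b : indep (tset x2) (Y1 ∪ Y2) (Y2.image ⇑g2) := by
    have h := hswir.monoR' hx2I hsY1 hsg2Y2
    rwa [Finset.union_comm Y2 Y1] at h
  have hF2c : indep (tset x2) Y2 (Y2.image ⇑g3⁻¹) := hswir.monoR hx2I hsg3Y2
  have hF2cc : indep (tset x2) Y2 (Y2.image ⇑g2) := hswir.monoR hx2I hsg2Y2
  have hF2d : indep (tset x2) (Y2 ∪ Y3) (tset x3) := hswir.monoR' hx2I hsY3 hsx3
  have hF2e : indep (tset x2) (Y2 ∪ Y3) (Y2.image ⇑g3⁻¹) :=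
    hswir.monoR' hx2I hsY3 hsg3Y2
  have hF2f : indep (tset (fun i => g2⁻¹ (x2 i))) Y1 Y2 := by
    have h := hswir.invariance g2⁻¹ (G.inv_mem hg2) _ _ _ hF2cc
    rwa [← tset_comp, e2', himg g2 rfl] at h
  ------------------------------------------------------------------
  -- type transports T2 and T3
  ------------------------------------------------------------------
  have hT2base : SameTypeOver G Y1 (fun i => g2⁻¹ (x2 i)) x1 := by
    have h := stoConj (G := G) g2⁻¹ (G.inv_mem hg2) hx2T
    rw [e2'] at h
    have h' : SameTypeOver G Y1 x1 (fun i => g2⁻¹ (x2 i)) := by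
      simpa only [Equiv.Perm.inv_apply_self] using h
    exact stoSymm h'
  have hT2 : SameTypeOver G (Y1 ∪ Y2) (fun i => g2⁻¹ (x2 i)) x1 :=
    hswir.stationary_right Y1 Y2 n _ x1 hT2base hF2f hx1i1
  -- T3 base case over Y3
  have c1 : SameTypeOver G Y3 (fun i => g3 (g2 (x1 i))) (fun i => g3 (x2 i)) := by
    have h := stoConj (G := G) g3 hg3 hx2T
    rwa [e3] at h
  have c2 : SameTypeOver G Y3 (fun i => g3 (g2 (g1 (x0 i))))
      (fun i => g3 (g2 (x1 i))) := by
    have h := stoConj (G := G) g2 hg2 hT1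
    rw [e2] at h
    have h' := stoConj (G := G) g3 hg3 h
    rwa [e3] at h'
  have c3 : SameTypeOver G Y3 (fun i => g3 (g2 (g1 (x0 i))))
      (fun i => g4⁻¹ (x4 i)) := by
    have h := stoConj (G := G) g4⁻¹ (G.inv_mem hg4) htp
    rw [e4'] at h
    simpa only [Equiv.Perm.mul_apply, Equiv.Perm.inv_apply_self] using h
  have hT3base : SameTypeOver G Y3 (fun i => g3 (x2 i)) x3 :=
    stoTrans (stoTrans (stoTrans (stoSymm c1) (stoSymm c2)) c3) hT4
  have hg3x2Y2 : indep (tset (fun i => g3 (x2 i))) Y3 Y2 := by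
    have h := hswir.invariance g3 hg3 _ _ _ hF2c
    have himg3 : (Y2.image ⇑g3⁻¹).image ⇑g3 = Y2 := by
      have := himg g3⁻¹ (rfl : Y2.image ⇑g3⁻¹ = Y2.image ⇑g3⁻¹)
      rwa [inv_inv] at this
    rwa [← tset_comp, e3, himg3] at h
  have hT3 : SameTypeOver G (Y2 ∪ Y3) (fun i => g3 (x2 i)) x3 := by
    have h := hswir.stationary_right Y3 Y2 n _ x3 hT3base hg3x2Y2 hx3i2
    rwa [Finset.union_comm Y3 Y2] at h
  ------------------------------------------------------------------
  -- STEP 2 : exact step for g2⁻¹ from x2 to x1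
  ------------------------------------------------------------------
  set X2p : Finset M := Y1 ∪ Y2 ∪ Y2.image ⇑g2 with hX2p
  obtain ⟨u2, hu2T, hu2I⟩ := hR2 X2p n x2
  obtain ⟨b2, hb2G, hb2fix, hb2map⟩ := hu2T
  set v2 : Fin n → M := fun i => b2⁻¹ (g2⁻¹ (u2 i)) with hv2
  have hE2a : indep (tset x2) X2p (tset v2) := by
    have h := hswir.invariance b2⁻¹ (G.inv_mem hb2G) _ _ _ hu2I
    rw [← tset_comp, ← tset_comp, image_fix (fix_inv hb2fix)] at h
    have hbx : (fun i => b2⁻¹ (u2 i)) = x2 := by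
      funext i
      rw [← hb2map i, Equiv.Perm.inv_apply_self]
    rwa [hbx] at h
  have hE2b : indep (tset x2) (Y1 ∪ Y2) (tset v2) :=
    hswir.trans_right (tset x2) (Y1 ∪ Y2) (Y2.image ⇑g2) (tset v2) hF2b hE2a
  -- v2 has the type of x1 over Y1 ∪ Y2
  have hX2pimg : Y1 ∪ Y2 ⊆ X2p.image ⇑g2⁻¹ := by
    have : X2p.image ⇑g2⁻¹ = Y1.image ⇑g2⁻¹ ∪ Y1 ∪ Y2 := by
      rw [hX2p, Finset.image_union, Finset.image_union, e2', himg g2 rfl]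
    rw [this]
    intro m hm
    rcases Finset.mem_union.mp hm with h | h
    · exact Finset.mem_union_left _ (Finset.mem_union_right _ h)
    · exact Finset.mem_union_right _ h
  have s2m : SameTypeOver G (Y1 ∪ Y2) (fun i => g2⁻¹ (x2 i))
      (fun i => g2⁻¹ (u2 i)) := by
    have h := stoConj (G := G) g2⁻¹ (G.inv_mem hg2)
      (⟨b2, hb2G, hb2fix, hb2map⟩ : SameTypeOver G X2p x2 u2)
    exact stoMono hX2pimg h
  have s3m : SameTypeOver G (Y1 ∪ Y2) (fun i => g2⁻¹ (u2 i)) v2 := by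
    refine stoMono (show Y1 ∪ Y2 ⊆ X2p from Finset.subset_union_left) ?_
    exact ⟨b2⁻¹, G.inv_mem hb2G, fix_inv hb2fix, fun i => rfl⟩
  have hE2c : SameTypeOver G (Y1 ∪ Y2) v2 x1 :=
    stoTrans (stoTrans (stoSymm s3m) (stoSymm s2m)) hT2
  have hE2d : SameTypeOver G (Y1 ∪ Y2 ∪ tset x2) v2 x1 :=
    hswir.stationary_left (Y1 ∪ Y2) (tset x2) n v2 x1 hE2c hE2b hF2a
  obtain ⟨cc2, hcc2G, hcc2fix, hcc2map⟩ := hE2d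
  ------------------------------------------------------------------
  -- STEP 3 : exact step for g3 from x2 to x3
  ------------------------------------------------------------------
  set X3p : Finset M := Y2 ∪ Y3 ∪ Y2.image ⇑g3⁻¹ with hX3p
  obtain ⟨u3, hu3T, hu3I⟩ := hR3 X3p n x2
  obtain ⟨b3, hb3G, hb3fix, hb3map⟩ := hu3T
  set v3 : Fin n → M := fun i => b3⁻¹ (g3 (u3 i)) with hv3
  have hE3a : indep (tset x2) X3p (tset v3) := by
    have h := hswir.invariance b3⁻¹ (G.inv_mem hb3G) _ _ _ hu3I
    rw [← tset_comp, ← tset_comp, image_fix (fix_inv hb3fix)] at h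
    have hbx : (fun i => b3⁻¹ (u3 i)) = x2 := by
      funext i
      rw [← hb3map i, Equiv.Perm.inv_apply_self]
    rwa [hbx] at h
  have hE3b : indep (tset x2) (Y2 ∪ Y3) (tset v3) :=
    hswir.trans_right (tset x2) (Y2 ∪ Y3) (Y2.image ⇑g3⁻¹) (tset v3) hF2e hE3a
  have hX3pimg : Y2 ∪ Y3 ⊆ X3p.image ⇑g3 := by
    have himg3 : (Y2.image ⇑g3⁻¹).image ⇑g3 = Y2 := by
      have := himg g3⁻¹ (rfl : Y2.image ⇑g3⁻¹ = Y2.image ⇑g3⁻¹)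
      rwa [inv_inv] at this
    have : X3p.image ⇑g3 = Y3 ∪ Y3.image ⇑g3 ∪ Y2 := by
      rw [hX3p, Finset.image_union, Finset.image_union, e3, himg3]
    rw [this]
    intro m hm
    rcases Finset.mem_union.mp hm with h | h
    · exact Finset.mem_union_right _ h
    · exact Finset.mem_union_left _ (Finset.mem_union_left _ h)
  have s2m3 : SameTypeOver G (Y2 ∪ Y3) (fun i => g3 (x2 i))
      (fun i => g3 (u3 i)) := by
    have h := stoConj (G := G) g3 hg3
      (⟨b3, hb3G, hb3fix, hb3map⟩ : SameTypeOver G X3p x2 u3)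
    exact stoMono hX3pimg h
  have s3m3 : SameTypeOver G (Y2 ∪ Y3) (fun i => g3 (u3 i)) v3 := by
    refine stoMono (show Y2 ∪ Y3 ⊆ X3p from Finset.subset_union_left) ?_
    exact ⟨b3⁻¹, G.inv_mem hb3G, fix_inv hb3fix, fun i => rfl⟩
  have hE3c : SameTypeOver G (Y2 ∪ Y3) v3 x3 :=
    stoTrans (stoTrans (stoSymm s3m3) (stoSymm s2m3)) hT3
  have hE3d : SameTypeOver G (Y2 ∪ Y3 ∪ tset x2) v3 x3 :=
    hswir.stationary_left (Y2 ∪ Y3) (tset x2) n v3 x3 hE3c hE3b hF2d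
  obtain ⟨cc3, hcc3G, hcc3fix, hcc3map⟩ := hE3d
  ------------------------------------------------------------------
  -- assemble
  ------------------------------------------------------------------
  refine ⟨b1⁻¹, G.inv_mem hb1G, cc2 * b2⁻¹, G.mul_mem hcc2G (G.inv_mem hb2G),
    cc3 * b3⁻¹, G.mul_mem hcc3G (G.inv_mem hb3G), b4⁻¹, G.inv_mem hb4G,
    fix_inv hb1fix, ?_, ?_, fix_inv hb4fix, ?_⟩
  · -- a2 fixes Y1 ∪ Y2
    intro m hm
    rw [Equiv.Perm.mul_apply,
      fix_inv hb2fix m (Finset.mem_union_left _ hm),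
      hcc2fix m (Finset.mem_union_left _ hm)]
  · -- a3 fixes Y2 ∪ Y3
    intro m hm
    rw [Equiv.Perm.mul_apply,
      fix_inv hb3fix m (Finset.mem_union_left _ hm),
      hcc3fix m (Finset.mem_union_left _ hm)]
  · -- the composition maps x0 to x4
    intro i
    -- step 1
    have h1 : (b1⁻¹ * g1 * b1⁻¹⁻¹) (x0 i) = x1 i := by
      simp only [inv_inv, Equiv.Perm.mul_apply, hx1]
    -- step 2
    have hc2x2 : ∀ j, cc2⁻¹ (x2 j) = x2 j := fun j =>
      fix_inv hcc2fix (x2 j) (Finset.mem_union_right _ (mem_tset x2 j))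
    have h2 : ((cc2 * b2⁻¹) * g2 * (cc2 * b2⁻¹)⁻¹) (x1 i) = x2 i := by
      have key : ((cc2 * b2⁻¹) * g2⁻¹ * (cc2 * b2⁻¹)⁻¹) (x2 i) = x1 i := by
        simp only [mul_inv_rev, inv_inv, Equiv.Perm.mul_apply]
        rw [hc2x2 i, hb2map i]
        exact hcc2map i
      calc ((cc2 * b2⁻¹) * g2 * (cc2 * b2⁻¹)⁻¹) (x1 i)
          = ((cc2 * b2⁻¹) * g2 * (cc2 * b2⁻¹)⁻¹)
            (((cc2 * b2⁻¹) * g2⁻¹ * (cc2 * b2⁻¹)⁻¹) (x2 i)) := by rw [key]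
        _ = x2 i := by
            simp only [Equiv.Perm.mul_apply, mul_inv_rev, inv_inv,
              Equiv.Perm.inv_apply_self, Equiv.Perm.apply_inv_self]
    -- step 3
    have hc3x2 : ∀ j, cc3⁻¹ (x2 j) = x2 j := fun j =>
      fix_inv hcc3fix (x2 j) (Finset.mem_union_right _ (mem_tset x2 j))
    have h3 : ((cc3 * b3⁻¹) * g3 * (cc3 * b3⁻¹)⁻¹) (x2 i) = x3 i := by
      simp only [mul_inv_rev, inv_inv, Equiv.Perm.mul_apply]
      rw [hc3x2 i, hb3map i]
      exact hcc3map i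
    -- step 4
    have h4 : (b4⁻¹ * g4 * b4⁻¹⁻¹) (x3 i) = x4 i := by
      simp only [inv_inv, Equiv.Perm.mul_apply, hx3]
      rw [Equiv.Perm.apply_inv_self, Equiv.Perm.apply_inv_self,
        Equiv.Perm.inv_apply_self]
    simp only [Equiv.Perm.mul_apply] at h1 h2 h3 h4 ⊢
    rw [h1, h2, h3, h4]
end
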